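/- arXiv:2404.11790 — 6 statements merged into one kernel-verified Lean document; each statement's English description precedes it below -/
import Mathlib

section
/- Let L, G, ρ > 0 and ω ≥ (ρ/L)(G + ρ/2). For j = 1,…,J let g̃_j : ℝ^n → ℝ be L-smooth and G-Lipschitz, and for i = 1,…,I let h_i : ℝ^n → ℝ be L-smooth and G-Lipschitz. Suppose x_t ∈ ℝ^n satisfies g̃_j(x_t) ≤ 0 for all j and h_i(x_t) ≤ 0 for all i, and suppose there exists d ∈ ℝ^n with ‖d‖ = 1 such that ⟨∇g̃_j(x_t), d⟩ ≤ −ρ for every j with g̃_j(x_t) ≥ −ω, and ⟨∇h_i(x_t), d⟩ ≤ −ρ for every i with h_i(x_t) ≥ −ω. Then the point x̃ := x_t + (ρ/L)·d satisfies g̃_j(x̃) ≤ −ρ²/(2L) for all j = 1,…,J and h_i(x̃) ≤ −ρ²/(2L) for all i = 1,…,I. (Existence of a Slater point for the SCA subproblem under strong (ω,ρ)-MFCQ, Lemma 5 of the paper.) -/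
set_option maxHeartbeats 1000000

open RealInnerProductSpace

lemma descent_step {n : ℕ} (L : ℝ) (hL : 0 < L)
    (f : EuclideanSpace ℝ (Fin n) → ℝ)
    (hf : Differentiable ℝ f)
    (hsm : ∀ x y, ‖gradient f x - gradient f y‖ ≤ L * ‖x - y‖)
    (x d : EuclideanSpace ℝ (Fin n)) (hd : ‖d‖ = 1)
    (s : ℝ) (hs : 0 ≤ s) :
    f (x + s • d) ≤ f x + s * ⟪gradient f x, d⟫ + L * s ^ 2 / 2 := by
  set c := ⟪gradient f x, d⟫ with hc
  have hline : ∀ t : ℝ, HasDerivAt (fun t : ℝ => x + t • d) d t := by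
    intro t
    simpa using ((hasDerivAt_id t).smul_const d).const_add x
  have hφ : ∀ t : ℝ, HasDerivAt (fun t : ℝ => f (x + t • d))
      ⟪gradient f (x + t • d), d⟫ t := by
    intro t
    have h1 := ((hf (x + t • d)).hasGradientAt).hasFDerivAt
    have := h1.comp_hasDerivAt t (hline t)
    simp at this ⊢; exact this
  have hψ : ∀ t : ℝ, HasDerivAt
      (fun t : ℝ => f x + t * c + L * t ^ 2 / 2 - f (x + t • d))
      (c + L * t - ⟪gradient f (x + t • d), d⟫) t := by
    intro t
    have h2 : HasDerivAt (fun t : ℝ => f x + t * c + L * t ^ 2 / 2)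
        (c + L * t) t := by
      have : HasDerivAt (fun t : ℝ => f x + t * c + L * t ^ 2 / 2)
          (0 + (1 * c) + L * (2 * t ^ 1) / 2) t := by
        exact (((hasDerivAt_const t (f x)).add
          ((hasDerivAt_id t).mul_const c)).add
          (((hasDerivAt_pow 2 t).const_mul L).div_const 2))
      simpa using this.congr_deriv (by ring)
    exact h2.sub (hφ t)
  have hmono : MonotoneOn (fun t : ℝ => f x + t * c + L * t ^ 2 / 2 - f (x + t • d))
      (Set.Icc 0 s) := by
    apply monotoneOn_of_deriv_nonneg (convex_Icc 0 s)
    · exact (Differentiable.continuous (fun t => (hψ t).differentiableAt)).continuousOn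
    · intro t ht
      exact (hψ t).differentiableAt.differentiableWithinAt
    · intro t ht
      rw [interior_Icc] at ht
      rw [(hψ t).deriv]
      have hcs : ⟪gradient f (x + t • d) - gradient f x, d⟫ ≤ L * t := by
        calc ⟪gradient f (x + t • d) - gradient f x, d⟫
            ≤ ‖gradient f (x + t • d) - gradient f x‖ * ‖d‖ :=
              real_inner_le_norm _ _
          _ ≤ L * ‖(x + t • d) - x‖ * 1 := by
              rw [hd]; exact mul_le_mul_of_nonneg_right (hsm _ _) zero_le_one
          _ = L * t := by
              simp only [add_sub_cancel_left, norm_smul, Real.norm_eq_abs, hd]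
              rw [abs_of_nonneg (le_of_lt (Set.mem_Ioo.mp ht).1)]
              ring
      have : ⟪gradient f (x + t • d), d⟫ ≤ c + L * t := by
        rw [inner_sub_left] at hcs; linarith
      linarith
  have h0 : (0:ℝ) ∈ Set.Icc (0:ℝ) s := ⟨le_refl _, hs⟩
  have hs' : s ∈ Set.Icc (0:ℝ) s := ⟨hs, le_refl _⟩
  have := hmono h0 hs' hs
  simp only [zero_smul, add_zero, zero_mul, mul_zero] at this
  nlinarith [this]


lemma constraint_bound {n : ℕ} (L G ρ ω : ℝ)
    (hL : 0 < L) (hG : 0 < G) (hρ : 0 < ρ)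
    (hω : ω ≥ (ρ / L) * (G + ρ / 2))
    (f : EuclideanSpace ℝ (Fin n) → ℝ)
    (hf : Differentiable ℝ f)
    (hsm : ∀ x y, ‖gradient f x - gradient f y‖ ≤ L * ‖x - y‖)
    (hlip : ∀ x y, |f x - f y| ≤ G * ‖x - y‖)
    (xt : EuclideanSpace ℝ (Fin n)) (hfeas : f xt ≤ 0)
    (d : EuclideanSpace ℝ (Fin n)) (hd : ‖d‖ = 1)
    (hmfcq : f xt ≥ -ω → ⟪gradient f xt, d⟫ ≤ -ρ) :
    f (xt + (ρ / L) • d) ≤ -ρ ^ 2 / (2 * L) := by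
  have hs : (0:ℝ) ≤ ρ / L := le_of_lt (div_pos hρ hL)
  by_cases hcase : f xt ≥ -ω
  · have hdesc := descent_step L hL f hf hsm xt d hd (ρ / L) hs
    have hin := hmfcq hcase
    have h1 : (ρ / L) * ⟪gradient f xt, d⟫ ≤ (ρ / L) * (-ρ) :=
      mul_le_mul_of_nonneg_left hin hs
    have heq : (ρ / L) * (-ρ) + L * (ρ / L) ^ 2 / 2 = -ρ ^ 2 / (2 * L) := by
      field_simp
      ring
    linarith
  · push_neg at hcase
    have hlip' := hlip (xt + (ρ / L) • d) xt
    have hnorm : ‖(xt + (ρ / L) • d) - xt‖ = ρ / L := by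
      simp [norm_smul, hd, abs_div, abs_of_nonneg hρ.le, abs_of_nonneg hL.le]
    rw [hnorm] at hlip'
    have h4 : f (xt + (ρ / L) • d) ≤ f xt + G * (ρ / L) := by
      cases abs_le.mp hlip' with
      | intro h1 h2 => linarith
    have hωL : ω ≥ ρ / L * G + ρ ^ 2 / (2 * L) := by
      have : (ρ / L) * (G + ρ / 2) = ρ / L * G + ρ ^ 2 / (2 * L) := by
        field_simp
      linarith [this ▸ hω]
    have e1 : G * (ρ / L) = ρ / L * G := by ring
    have e2 : -ρ ^ 2 / (2 * L) = -(ρ ^ 2 / (2 * L)) := by ring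
    linarith


/-- Existence of a Slater point for the SCA subproblem under strong (ω,ρ)-MFCQ (Lemma 5). -/
theorem slater_point_exists {n J I : ℕ} (L G ρ ω : ℝ)
    (hL : 0 < L) (hG : 0 < G) (hρ : 0 < ρ)
    (hω : ω ≥ (ρ / L) * (G + ρ / 2))
    (gtil : Fin J → EuclideanSpace ℝ (Fin n) → ℝ)
    (h : Fin I → EuclideanSpace ℝ (Fin n) → ℝ)
    (hg_diff : ∀ j, Differentiable ℝ (gtil j))
    (hg_smooth : ∀ j x y, ‖gradient (gtil j) x - gradient (gtil j) y‖ ≤ L * ‖x - y‖)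
    (hg_lip : ∀ j x y, |gtil j x - gtil j y| ≤ G * ‖x - y‖)
    (hh_diff : ∀ i, Differentiable ℝ (h i))
    (hh_smooth : ∀ i x y, ‖gradient (h i) x - gradient (h i) y‖ ≤ L * ‖x - y‖)
    (hh_lip : ∀ i x y, |h i x - h i y| ≤ G * ‖x - y‖)
    (xt : EuclideanSpace ℝ (Fin n))
    (hfeas_g : ∀ j, gtil j xt ≤ 0) (hfeas_h : ∀ i, h i xt ≤ 0)
    (d : EuclideanSpace ℝ (Fin n)) (hd : ‖d‖ = 1)
    (hmfcq_g : ∀ j, gtil j xt ≥ -ω → ⟪gradient (gtil j) xt, d⟫ ≤ -ρ)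
    (hmfcq_h : ∀ i, h i xt ≥ -ω → ⟪gradient (h i) xt, d⟫ ≤ -ρ) :
    (∀ j, gtil j (xt + (ρ / L) • d) ≤ -ρ ^ 2 / (2 * L)) ∧
      (∀ i, h i (xt + (ρ / L) • d) ≤ -ρ ^ 2 / (2 * L)) := by
  constructor
  · intro j
    exact constraint_bound L G ρ ω hL hG hρ hω (gtil j) (hg_diff j) (hg_smooth j)
      (hg_lip j) xt (hfeas_g j) d hd (hmfcq_g j)
  · intro i
    exact constraint_bound L G ρ ω hL hG hρ hω (h i) (hh_diff i) (hh_smooth i)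
      (hh_lip i) xt (hfeas_h i) d hd (hmfcq_h i)
end

section
/- Let L, ρ > 0 and B_U ≥ 0. Let F̃ : ℝ^n → ℝ be convex and differentiable, u : ℝ^n → ℝ be convex, and for j = 1,…,J and i = 1,…,I let g̃_j, h_i : ℝ^n → ℝ be convex and differentiable. Let x̂, x̃ ∈ ℝ^n, λ ∈ ℝ^J with λ_j ≥ 0, ν ∈ ℝ^I with ν_i ≥ 0, and v ∈ ℝ^n a subgradient of u at x̂, such that: (stationarity) ∇F̃(x̂) + v + Σ_j λ_j ∇g̃_j(x̂) + Σ_i ν_i ∇h_i(x̂) = 0; (complementary slackness) λ_j · g̃_j(x̂) = 0 for all j and ν_i · h_i(x̂) = 0 for all i; (Slater point) g̃_j(x̃) ≤ −ρ²/(2L) for all j and h_i(x̃) ≤ −ρ²/(2L) for all i; and (boundedness) F̃(x̃) + u(x̃) − (F̃(x̂) + u(x̂)) ≤ B_U. Then Σ_{j=1}^J λ_j + Σ_{i=1}^I ν_i ≤ 2·B_U·L/ρ². (Bound on the dual variables, Lemma 6 of the paper.) -/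
open RealInnerProductSpace


open RealInnerProductSpace

lemma convex_grad_le_aux {n : ℕ} (f : EuclideanSpace ℝ (Fin n) → ℝ)
    (hc : ConvexOn ℝ Set.univ f) (hd : Differentiable ℝ f)
    (x y : EuclideanSpace ℝ (Fin n)) :
    ⟪gradient f x, y - x⟫ ≤ f y - f x := by
  set d := y - x with hd_def
  -- the 1D restriction
  have hφc : ConvexOn ℝ Set.univ (fun t : ℝ => f (x + t • d)) := by
    have := hc.comp_affineMap (AffineMap.lineMap x y)
    have heq : (f ∘ AffineMap.lineMap x y) = fun t : ℝ => f (x + t • d) := by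
      funext t
      simp [AffineMap.lineMap_apply, hd_def, add_comm]
    rw [heq] at this
    simpa using this
  have hder : HasDerivAt (fun t : ℝ => f (x + t • d)) (fderiv ℝ f (x + (0:ℝ) • d) d) 0 := by
    have h1 : HasDerivAt (fun t : ℝ => x + t • d) d 0 := by
      simpa using ((hasDerivAt_id (0:ℝ)).smul_const d).const_add x
    exact (hd _).hasFDerivAt.comp_hasDerivAt 0 h1
  have key := hφc.le_slope_of_hasDerivAt (Set.mem_univ (0:ℝ)) (Set.mem_univ (1:ℝ))
    one_pos hder
  have hfd : fderiv ℝ f x d = ⟪gradient f x, d⟫ := by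
    have hg := (hd x).hasGradientAt
    rw [hasGradientAt_iff_hasFDerivAt] at hg
    rw [hg.fderiv]
    exact InnerProductSpace.toDual_apply_apply
  have hs : slope (fun t : ℝ => f (x + t • d)) 0 1 = f y - f x := by
    simp [slope_def_field, hd_def]
  rw [hs] at key
  simp only [zero_smul, add_zero] at key
  rw [hfd] at key
  exact key

/-- Bound on the dual variables (Lemma 6). -/
theorem dual_variable_bound {n J I : ℕ} (L ρ B_U : ℝ)
    (hL : 0 < L) (hρ : 0 < ρ) (hB : 0 ≤ B_U)
    (Ftil u : EuclideanSpace ℝ (Fin n) → ℝ)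
    (gtil : Fin J → EuclideanSpace ℝ (Fin n) → ℝ)
    (h : Fin I → EuclideanSpace ℝ (Fin n) → ℝ)
    (hF_conv : ConvexOn ℝ Set.univ Ftil) (hF_diff : Differentiable ℝ Ftil)
    (hu_conv : ConvexOn ℝ Set.univ u)
    (hg_conv : ∀ j, ConvexOn ℝ Set.univ (gtil j))
    (hg_diff : ∀ j, Differentiable ℝ (gtil j))
    (hh_conv : ∀ i, ConvexOn ℝ Set.univ (h i))
    (hh_diff : ∀ i, Differentiable ℝ (h i))
    (xhat xtil : EuclideanSpace ℝ (Fin n))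
    (lam : Fin J → ℝ) (hlam : ∀ j, 0 ≤ lam j)
    (nu : Fin I → ℝ) (hnu : ∀ i, 0 ≤ nu i)
    (v : EuclideanSpace ℝ (Fin n))
    (hv : ∀ y, u y ≥ u xhat + ⟪v, y - xhat⟫)
    (hstat : gradient Ftil xhat + v + ∑ j, lam j • gradient (gtil j) xhat
        + ∑ i, nu i • gradient (h i) xhat = 0)
    (hcs_g : ∀ j, lam j * gtil j xhat = 0)
    (hcs_h : ∀ i, nu i * h i xhat = 0)
    (hslater_g : ∀ j, gtil j xtil ≤ -ρ ^ 2 / (2 * L))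
    (hslater_h : ∀ i, h i xtil ≤ -ρ ^ 2 / (2 * L))
    (hbound : Ftil xtil + u xtil - (Ftil xhat + u xhat) ≤ B_U) :
    ∑ j, lam j + ∑ i, nu i ≤ 2 * B_U * L / ρ ^ 2 := by
  set d := xtil - xhat with hd_def
  set c := ρ ^ 2 / (2 * L) with hc_def
  have hc_pos : 0 < c := by positivity
  have hst : ⟪gradient Ftil xhat, d⟫ + ⟪v, d⟫ + (∑ j, lam j * ⟪gradient (gtil j) xhat, d⟫)
      + (∑ i, nu i * ⟪gradient (h i) xhat, d⟫) = 0 := by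
    have := congrArg (fun z : EuclideanSpace ℝ (Fin n) => ⟪z, d⟫) hstat
    simpa only [inner_add_left, sum_inner, real_inner_smul_left, inner_zero_left] using this
  have hF := convex_grad_le_aux Ftil hF_conv hF_diff xhat xtil
  rw [← hd_def] at hF
  have hu' : ⟪v, d⟫ ≤ u xtil - u xhat := by
    have := hv xtil; rw [hd_def]; linarith
  have hgsum : (∑ j, lam j * ⟪gradient (gtil j) xhat, d⟫) ≤ ∑ j, lam j * (-c) := by
    apply Finset.sum_le_sum
    intro j _
    have h1 := convex_grad_le_aux (gtil j) (hg_conv j) (hg_diff j) xhat xtil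
    rw [← hd_def] at h1
    have h2 := hcs_g j
    have h3 : gtil j xtil ≤ -c := by rw [hc_def, ← neg_div]; exact hslater_g j
    nlinarith [mul_le_mul_of_nonneg_left h1 (hlam j), mul_le_mul_of_nonneg_left h3 (hlam j)]
  have hhsum : (∑ i, nu i * ⟪gradient (h i) xhat, d⟫) ≤ ∑ i, nu i * (-c) := by
    apply Finset.sum_le_sum
    intro i _
    have h1 := convex_grad_le_aux (h i) (hh_conv i) (hh_diff i) xhat xtil
    rw [← hd_def] at h1
    have h2 := hcs_h i
    have h3 : h i xtil ≤ -c := by rw [hc_def, ← neg_div]; exact hslater_h i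
    nlinarith [mul_le_mul_of_nonneg_left h1 (hnu i), mul_le_mul_of_nonneg_left h3 (hnu i)]
  have hgc : (∑ j, lam j * (-c)) = -(c * ∑ j, lam j) := by
    rw [Finset.mul_sum]; rw [← Finset.sum_neg_distrib]
    apply Finset.sum_congr rfl; intro j _; ring
  have hhc : (∑ i, nu i * (-c)) = -(c * ∑ i, nu i) := by
    rw [Finset.mul_sum]; rw [← Finset.sum_neg_distrib]
    apply Finset.sum_congr rfl; intro i _; ring
  rw [hgc] at hgsum
  rw [hhc] at hhsum
  have hkey : c * (∑ j, lam j + ∑ i, nu i) ≤ B_U := by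
    have hlhs : ⟪gradient Ftil xhat, d⟫ + ⟪v, d⟫ ≤ B_U := by linarith
    nlinarith
  rw [le_div_iff₀ (by positivity : (0:ℝ) < ρ ^ 2)]
  have hS := mul_le_mul_of_nonneg_right hkey (by positivity : (0:ℝ) ≤ 2 * L)
  have heq : c * (∑ j, lam j + ∑ i, nu i) * (2 * L)
      = (∑ j, lam j + ∑ i, nu i) * ρ ^ 2 := by
    rw [hc_def]; field_simp
  nlinarith [hS, heq]
end

section
/- Let K′ ⊆ ℝ^n be a convex set, L > 0, μ > 0, and η ∈ (0,1] with μ ≥ Lη/2 + 3/4. Let U : ℝ^n → ℝ be L-smooth, u : ℝ^n → ℝ be convex, and f̃ : ℝ^n → ℝ be μ-strongly convex and differentiable. Let x_t, x̂ ∈ K′ and let v ∈ ℝ^n be a subgradient of u at x̂ satisfying ⟨y − x̂, ∇f̃(x̂) + v⟩ ≥ 0 for all y ∈ K′. Set z := ∇f̃(x_t), F := U + u, and x_{t+1} := (1−η)x_t + η x̂. Then F(x_{t+1}) − F(x_t) ≤ (η/2)‖z − ∇U(x_t)‖² − (η/4)‖x̂ − x_t‖². (Deterministic core of the descent lemma,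 Lemma 2 of the paper.) -/
open RealInnerProductSpace

private lemma line_hasDerivAt {n : ℕ} (f : EuclideanSpace ℝ (Fin n) → ℝ)
    (hf : Differentiable ℝ f) (x w : EuclideanSpace ℝ (Fin n)) (t : ℝ) :
    HasDerivAt (fun s : ℝ => f (x + s • w)) ⟪gradient f (x + t • w), w⟫ t := by
  have hc : HasDerivAt (fun s : ℝ => x + s • w) w t := by
    simpa using ((hasDerivAt_id t).smul_const w).const_add x
  have hg := (hf (x + t • w)).hasGradientAt
  rw [hasGradientAt_iff_hasFDerivAt] at hg
  have := hg.comp_hasDerivAt t hc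
  simpa [InnerProductSpace.toDual_apply_apply, Function.comp_def] using this

private lemma convex_grad_ineq {n : ℕ} (f : EuclideanSpace ℝ (Fin n) → ℝ)
    (hconv : ConvexOn ℝ Set.univ f) (hf : Differentiable ℝ f)
    (x y : EuclideanSpace ℝ (Fin n)) :
    f x + ⟪gradient f x, y - x⟫ ≤ f y := by
  set h : ℝ → ℝ := fun s => f (x + s • (y - x)) with hh
  have hconv' : ConvexOn ℝ Set.univ h := by
    have := hconv.comp_affineMap (AffineMap.lineMap x y)
    simp only [Set.preimage_univ] at this
    suffices hfun : h = f ∘ AffineMap.lineMap x y by rw [hfun]; exact this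
    funext s
    simp [hh, AffineMap.lineMap_apply, Function.comp]
    congr 1
    module
  have hd0 := line_hasDerivAt f hf x (y - x) 0
  have hs := hconv'.le_slope_of_hasDerivAt (Set.mem_univ (0:ℝ)) (Set.mem_univ (1:ℝ))
    one_pos hd0
  rw [slope_def_field] at hs
  have h0 : h 0 = f x := by simp [hh]
  have h1 : h 1 = f y := by simp [hh]
  rw [h0, h1] at hs
  simp only [zero_smul, add_zero, sub_zero, div_one] at hs
  linarith

private lemma descent_ineq {n : ℕ} (f : EuclideanSpace ℝ (Fin n) → ℝ)
    (hf : Differentiable ℝ f) (L : ℝ) (hL : 0 ≤ L)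
    (hLip : ∀ a b, ‖gradient f a - gradient f b‖ ≤ L * ‖a - b‖)
    (x w : EuclideanSpace ℝ (Fin n)) :
    f (x + w) ≤ f x + ⟪gradient f x, w⟫ + L / 2 * ‖w‖ ^ 2 := by
  set φ : ℝ → ℝ := fun t => f (x + t • w) - t * ⟪gradient f x, w⟫ - L/2 * t^2 * ‖w‖^2 with hφ
  have hder : ∀ t : ℝ, HasDerivAt φ
      (⟪gradient f (x + t • w), w⟫ - ⟪gradient f x, w⟫ - L/2 * (2*t) * ‖w‖^2) t := by
    intro t
    have h1 := line_hasDerivAt f hf x w t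
    have h2 : HasDerivAt (fun t : ℝ => t * ⟪gradient f x, w⟫) ⟪gradient f x, w⟫ t := by
      simpa using (hasDerivAt_id t).mul_const (⟪gradient f x, w⟫ : ℝ)
    have h3 : HasDerivAt (fun t : ℝ => L/2 * t^2 * ‖w‖^2) (L/2 * (2*t) * ‖w‖^2) t := by
      have := ((hasDerivAt_pow 2 t).const_mul (L/2)).mul_const (‖w‖^2)
      simpa [mul_comm, mul_assoc, mul_left_comm] using this
    exact (h1.sub h2).sub h3
  have hdiff : Differentiable ℝ φ := fun t => (hder t).differentiableAt
  have hmono : AntitoneOn φ (Set.Icc (0:ℝ) 1) := by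
    apply antitoneOn_of_deriv_nonpos (convex_Icc 0 1) hdiff.continuous.continuousOn
      (hdiff.differentiableOn)
    intro t ht
    rw [interior_Icc] at ht
    rw [(hder t).deriv]
    have hcs : (⟪gradient f (x + t • w) - gradient f x, w⟫ : ℝ)
        ≤ ‖gradient f (x + t • w) - gradient f x‖ * ‖w‖ := real_inner_le_norm _ _
    have hlip := hLip (x + t • w) x
    have h1 : ‖x + t • w - x‖ = t * ‖w‖ := by
      simp [norm_smul, abs_of_pos ht.1]
    rw [h1] at hlip
    have hw : (0:ℝ) ≤ ‖w‖ := norm_nonneg _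
    have h2 : ‖gradient f (x + t • w) - gradient f x‖ * ‖w‖ ≤ L * (t * ‖w‖) * ‖w‖ :=
      mul_le_mul_of_nonneg_right hlip hw
    rw [inner_sub_left] at hcs
    nlinarith [ht.1.le]
  have := hmono (Set.mem_Icc.2 ⟨le_refl 0, zero_le_one⟩) (Set.mem_Icc.2 ⟨zero_le_one, le_refl 1⟩)
    zero_le_one
  simp only [hφ, zero_smul, add_zero, one_smul, zero_mul, sub_zero, one_pow, mul_one, zero_pow,
    one_mul] at this
  linarith

private lemma grad_of_sub_normsq {n : ℕ} (f : EuclideanSpace ℝ (Fin n) → ℝ)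
    (hf : Differentiable ℝ f) (μ : ℝ) (x : EuclideanSpace ℝ (Fin n)) :
    gradient (fun y => f y - μ / 2 * ‖y‖ ^ 2) x = gradient f x - μ • x := by
  apply HasGradientAt.gradient
  rw [hasGradientAt_iff_hasFDerivAt]
  have h1 : HasFDerivAt f (InnerProductSpace.toDual ℝ _ (gradient f x)) x := by
    have := (hf x).hasGradientAt
    rwa [hasGradientAt_iff_hasFDerivAt] at this
  have h2 : HasFDerivAt (fun y : EuclideanSpace ℝ (Fin n) => μ / 2 * ‖y‖ ^ 2)
      ((μ/2) • (2 • (innerSL ℝ x))) x :=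
    (hasStrictFDerivAt_norm_sq x).hasFDerivAt.const_smul (μ/2)
  have := h1.sub h2
  refine this.congr_fderiv ?_
  ext y
  simp [inner_sub_left, inner_smul_left, real_inner_comm]
  ring

set_option maxHeartbeats 1000000 in
/-- Deterministic core of the descent lemma (Lemma 2). -/
theorem descent_lemma_core {n : ℕ}
    (K' : Set (EuclideanSpace ℝ (Fin n))) (hK' : Convex ℝ K')
    (L μ η : ℝ) (hL : 0 < L) (hμ : 0 < μ)
    (hη0 : 0 < η) (hη1 : η ≤ 1) (hμη : μ ≥ L * η / 2 + 3 / 4)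
    (U : EuclideanSpace ℝ (Fin n) → ℝ)
    (hU_diff : Differentiable ℝ U)
    (hU_smooth : ∀ x y, ‖gradient U x - gradient U y‖ ≤ L * ‖x - y‖)
    (u : EuclideanSpace ℝ (Fin n) → ℝ) (hu_conv : ConvexOn ℝ Set.univ u)
    (ftil : EuclideanSpace ℝ (Fin n) → ℝ)
    (hf_diff : Differentiable ℝ ftil)
    (hf_sc : ConvexOn ℝ Set.univ (fun x => ftil x - μ / 2 * ‖x‖ ^ 2))
    (xt xhat : EuclideanSpace ℝ (Fin n)) (hxt : xt ∈ K') (hxh : xhat ∈ K')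
    (v : EuclideanSpace ℝ (Fin n))
    (hv : ∀ y, u y ≥ u xhat + ⟪v, y - xhat⟫)
    (hopt : ∀ y ∈ K', ⟪y - xhat, gradient ftil xhat + v⟫ ≥ 0) :
    (U ((1 - η) • xt + η • xhat) + u ((1 - η) • xt + η • xhat)) - (U xt + u xt)
      ≤ η / 2 * ‖gradient ftil xt - gradient U xt‖ ^ 2
        - η / 4 * ‖xhat - xt‖ ^ 2 := by
  set d := xhat - xt with hd
  have hx1 : (1 - η) • xt + η • xhat = xt + η • d := by
    rw [hd]; module
  -- smoothness bound on U
  have hU1 : U (xt + η • d) ≤ U xt + ⟪gradient U xt, η • d⟫ + L / 2 * ‖η • d‖ ^ 2 :=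
    descent_ineq U hU_diff L hL.le hU_smooth xt (η • d)
  rw [real_inner_smul_right] at hU1
  have hnsm : ‖η • d‖ ^ 2 = η ^ 2 * ‖d‖ ^ 2 := by
    rw [norm_smul]; simp [abs_of_pos hη0]; ring
  rw [hnsm] at hU1
  -- convexity of u
  have hu1 : u ((1 - η) • xt + η • xhat) ≤ (1 - η) * u xt + η * u xhat :=
    hu_conv.2 (Set.mem_univ xt) (Set.mem_univ xhat) (by linarith) hη0.le (by ring)
  -- subgradient at xt
  have hsub : u xt ≥ u xhat + ⟪v, xt - xhat⟫ := hv xt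
  have hxtd : xt - xhat = -d := by rw [hd]; abel
  rw [hxtd, inner_neg_right] at hsub
  -- optimality
  have hopt' := hopt xt hxt
  rw [hxtd, inner_neg_left, inner_add_right] at hopt'
  have hopt'' : (⟪d, gradient ftil xhat⟫ : ℝ) + ⟪d, v⟫ ≤ 0 := by linarith
  -- strong convexity: gradient monotonicity
  set g : EuclideanSpace ℝ (Fin n) → ℝ := fun x => ftil x - μ / 2 * ‖x‖ ^ 2 with hg
  have hg_diff : Differentiable ℝ g := by
    apply hf_diff.sub
    apply Differentiable.const_mul
    exact fun y => ((hasStrictFDerivAt_norm_sq y).hasFDerivAt).differentiableAt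
  have hgr : ∀ x, gradient g x = gradient ftil x - μ • x :=
    fun x => grad_of_sub_normsq ftil hf_diff μ x
  have hsc1 := convex_grad_ineq g hf_sc hg_diff xt xhat
  have hsc2 := convex_grad_ineq g hf_sc hg_diff xhat xt
  rw [hgr, ← hd, inner_sub_left, real_inner_smul_left] at hsc1
  rw [hgr, hxtd, inner_neg_right, inner_sub_left, real_inner_smul_left] at hsc2
  -- ⟪xhat, d⟫ - ⟪xt, d⟫ = ‖d‖^2
  have hdd : (⟪xhat, d⟫ : ℝ) - ⟪xt, d⟫ = ‖d‖ ^ 2 := by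
    rw [← inner_sub_left, ← hd, real_inner_self_eq_norm_sq]
  have hmono : (⟪gradient ftil xhat, d⟫ : ℝ) - ⟪gradient ftil xt, d⟫ ≥ μ * ‖d‖ ^ 2 := by
    nlinarith [hsc1, hsc2, hdd]
  -- Cauchy-Schwarz
  have hcs : (⟪gradient U xt, d⟫ : ℝ) - ⟪gradient ftil xt, d⟫
      ≤ ‖gradient ftil xt - gradient U xt‖ * ‖d‖ := by
    have h1 : (⟪gradient U xt - gradient ftil xt, d⟫ : ℝ)
        ≤ ‖gradient U xt - gradient ftil xt‖ * ‖d‖ := real_inner_le_norm _ _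
    rw [inner_sub_left] at h1
    rw [norm_sub_rev] at h1
    linarith
  -- symmetry of inner products appearing with both orders
  have hsym1 : (⟪d, gradient ftil xhat⟫ : ℝ) = ⟪gradient ftil xhat, d⟫ := real_inner_comm _ _
  have hsym2 : (⟪d, v⟫ : ℝ) = ⟪v, d⟫ := real_inner_comm _ _
  rw [hsym1, hsym2] at hopt''
  set N := ‖gradient ftil xt - gradient U xt‖ with hN
  set D := ‖d‖ with hD
  have hD0 : 0 ≤ D := norm_nonneg _
  have hN0 : 0 ≤ N := norm_nonneg _
  rw [hx1] at hu1 ⊢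
  have key : η * (⟪gradient U xt, d⟫ - ⟪gradient ftil xt, d⟫) ≤ η * (N * D) :=
    mul_le_mul_of_nonneg_left hcs hη0.le
  have amgm : η * (N * D) ≤ η / 2 * N ^ 2 + η / 2 * D ^ 2 := by nlinarith [sq_nonneg (N - D)]
  have hmulu : η * (u xhat - u xt) ≤ η * (-⟪gradient ftil xt, d⟫ - μ * D ^ 2) := by
    apply mul_le_mul_of_nonneg_left _ hη0.le
    linarith [hsub, hopt'', hmono]
  have hcoef : (L / 2 * η ^ 2 - η * μ + η / 2 + η / 4) * D ^ 2 ≤ 0 := by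
    have h1 : L / 2 * η ^ 2 - η * μ + η / 2 + η / 4 ≤ 0 := by nlinarith [hη0.le]
    exact mul_nonpos_of_nonpos_of_nonneg h1 (sq_nonneg D)
  nlinarith [hU1, hu1, hmulu, key, amgm, hcoef]
end

section
/- Let L > 0. Let U, f̂ : ℝ^n → ℝ be L-smooth, and for j = 1,…,J let g_j, g̃_j : ℝ^n → ℝ be L-smooth. Let h_i : ℝ^n → ℝ, i = 1,…,I, be differentiable. Let x_t, x̂, z, v ∈ ℝ^n, λ ∈ ℝ^J with λ_j ≥ 0, and ν ∈ ℝ^I. Assume the tangent-match condition ∇g_j(x_t) = ∇g̃_j(x_t) for all j, and the subproblem stationarity condition ∇f̂(x̂) − ∇f̂(x_t) + z + v + Σ_j λ_j ∇g̃_j(x̂) + Σ_i ν_i ∇h_i(x̂) = 0. Then ‖∇U(x̂) + Σ_{j=1}^J λ_j ∇g_j(x̂) + Σ_{i=1}^I ν_i ∇h_i(x̂) + v‖ ≤ 2L(1 + Σ_{j=1}^J λ_j)‖x̂ − x_t‖ + ‖z − ∇U(x_t)‖. (KKT-residual bound in the proof of Theorem 2.) -/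
open RealInnerProductSpace

/-- KKT-residual bound in the proof of Theorem 2. -/
theorem kkt_residual_bound {n J I : ℕ} (L : ℝ) (hL : 0 < L)
    (U fhat : EuclideanSpace ℝ (Fin n) → ℝ)
    (hU_diff : Differentiable ℝ U)
    (hU_smooth : ∀ x y, ‖gradient U x - gradient U y‖ ≤ L * ‖x - y‖)
    (hf_diff : Differentiable ℝ fhat)
    (hf_smooth : ∀ x y, ‖gradient fhat x - gradient fhat y‖ ≤ L * ‖x - y‖)
    (g gtil : Fin J → EuclideanSpace ℝ (Fin n) → ℝ)
    (hg_diff : ∀ j, Differentiable ℝ (g j))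
    (hg_smooth : ∀ j x y, ‖gradient (g j) x - gradient (g j) y‖ ≤ L * ‖x - y‖)
    (hgt_diff : ∀ j, Differentiable ℝ (gtil j))
    (hgt_smooth : ∀ j x y, ‖gradient (gtil j) x - gradient (gtil j) y‖ ≤ L * ‖x - y‖)
    (h : Fin I → EuclideanSpace ℝ (Fin n) → ℝ)
    (hh_diff : ∀ i, Differentiable ℝ (h i))
    (xt xhat z v : EuclideanSpace ℝ (Fin n))
    (lam : Fin J → ℝ) (hlam : ∀ j, 0 ≤ lam j)
    (nu : Fin I → ℝ)
    (htangent : ∀ j, gradient (g j) xt = gradient (gtil j) xt)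
    (hstat : gradient fhat xhat - gradient fhat xt + z + v
        + ∑ j, lam j • gradient (gtil j) xhat
        + ∑ i, nu i • gradient (h i) xhat = 0) :
    ‖gradient U xhat + ∑ j, lam j • gradient (g j) xhat
        + ∑ i, nu i • gradient (h i) xhat + v‖
      ≤ 2 * L * (1 + ∑ j, lam j) * ‖xhat - xt‖ + ‖z - gradient U xt‖ := by
  have h2 : ∑ i, nu i • gradient (h i) xhat
      = -(gradient fhat xhat - gradient fhat xt + z + v
          + ∑ j, lam j • gradient (gtil j) xhat) :=
    eq_neg_of_add_eq_zero_right hstat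
  have ht : ∑ j, lam j • gradient (g j) xt = ∑ j, lam j • gradient (gtil j) xt :=
    Finset.sum_congr rfl fun j _ => by rw [htangent j]
  have key : gradient U xhat + ∑ j, lam j • gradient (g j) xhat
        + ∑ i, nu i • gradient (h i) xhat + v
      = (gradient U xhat - gradient U xt) + (gradient fhat xt - gradient fhat xhat)
        + (∑ j, lam j • (gradient (g j) xhat - gradient (g j) xt))
        + (∑ j, lam j • (gradient (gtil j) xt - gradient (gtil j) xhat))
        + (gradient U xt - z) := by
    rw [h2]
    simp only [smul_sub, Finset.sum_sub_distrib]
    rw [ht]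
    abel
  rw [key]
  set D := ‖xhat - xt‖ with hD
  have hA : ‖gradient U xhat - gradient U xt‖ ≤ L * D := hU_smooth xhat xt
  have hB : ‖gradient fhat xt - gradient fhat xhat‖ ≤ L * D := by
    rw [← norm_neg]; simpa [neg_sub] using hf_smooth xhat xt
  have hC : ‖∑ j, lam j • (gradient (g j) xhat - gradient (g j) xt)‖
      ≤ (∑ j, lam j) * (L * D) := by
    calc ‖∑ j, lam j • (gradient (g j) xhat - gradient (g j) xt)‖
        ≤ ∑ j, ‖lam j • (gradient (g j) xhat - gradient (g j) xt)‖ := norm_sum_le _ _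
      _ ≤ ∑ j, lam j * (L * D) := by
          refine Finset.sum_le_sum fun j _ => ?_
          rw [norm_smul, Real.norm_eq_abs, abs_of_nonneg (hlam j)]
          exact mul_le_mul_of_nonneg_left (hg_smooth j xhat xt) (hlam j)
      _ = (∑ j, lam j) * (L * D) := by rw [← Finset.sum_mul]
  have hCt : ‖∑ j, lam j • (gradient (gtil j) xt - gradient (gtil j) xhat)‖
      ≤ (∑ j, lam j) * (L * D) := by
    calc ‖∑ j, lam j • (gradient (gtil j) xt - gradient (gtil j) xhat)‖
        ≤ ∑ j, ‖lam j • (gradient (gtil j) xt - gradient (gtil j) xhat)‖ := norm_sum_le _ _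
      _ ≤ ∑ j, lam j * (L * D) := by
          refine Finset.sum_le_sum fun j _ => ?_
          rw [norm_smul, Real.norm_eq_abs, abs_of_nonneg (hlam j)]
          refine mul_le_mul_of_nonneg_left ?_ (hlam j)
          rw [← norm_neg]; simpa [neg_sub] using hgt_smooth j xhat xt
      _ = (∑ j, lam j) * (L * D) := by rw [← Finset.sum_mul]
  have hE : ‖gradient U xt - z‖ = ‖z - gradient U xt‖ := norm_sub_rev _ _
  calc ‖_ + _ + _ + _ + (gradient U xt - z)‖
      ≤ ‖gradient U xhat - gradient U xt‖ + ‖gradient fhat xt - gradient fhat xhat‖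
        + ‖∑ j, lam j • (gradient (g j) xhat - gradient (g j) xt)‖
        + ‖∑ j, lam j • (gradient (gtil j) xt - gradient (gtil j) xhat)‖
        + ‖gradient U xt - z‖ := by
          exact le_trans (norm_add_le _ _) (by
            gcongr
            exact le_trans (norm_add_le _ _) (by
              gcongr
              exact le_trans (norm_add_le _ _) (by gcongr; exact norm_add_le _ _)))
    _ ≤ 2 * L * (1 + ∑ j, lam j) * D + ‖z - gradient U xt‖ := by
        rw [← hE]; nlinarith [hA, hB, hC, hCt]
end

section
/- Let L > 0 and for j = 1,…,J let g_j, g̃_j : ℝ^n → ℝ both be L-smooth with g_j(x_t) = g̃_j(x_t) and ∇g_j(x_t) = ∇g̃_j(x_t) at a point x_t ∈ ℝ^n. Let x̂ ∈ ℝ^n and λ ∈ ℝ^J with λ_j ≥ 0 and λ_j · g̃_j(x̂) = 0 for all j. Then Σ_{j=1}^J λ_j g_j(x̂) ≥ −L (Σ_{j=1}^J λ_j) ‖x̂ − x_t‖². (Approximate complementary slackness bound in the proof of Theorem 2.) -/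
open RealInnerProductSpace

lemma taylor_quadratic_bound {n : ℕ} (L : ℝ) (f : EuclideanSpace ℝ (Fin n) → ℝ)
    (hd : Differentiable ℝ f)
    (hs : ∀ x y, ‖gradient f x - gradient f y‖ ≤ L * ‖x - y‖)
    (x y : EuclideanSpace ℝ (Fin n)) :
    |f y - f x - ⟪gradient f x, y - x⟫| ≤ L / 2 * ‖y - x‖ ^ 2 := by
  set v := y - x with hv
  set φ : ℝ → ℝ := fun t => f (x + t • v) - f x - t * ⟪gradient f x, v⟫ with hφ
  set φ' : ℝ → ℝ := fun t => ⟪gradient f (x + t • v), v⟫ - ⟪gradient f x, v⟫ with hφ'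
  have hc : ∀ t : ℝ, HasDerivAt (fun s : ℝ => x + s • v) v t := by
    intro t
    simpa using ((hasDerivAt_id t).smul_const v).const_add x
  have hderiv : ∀ t : ℝ, HasDerivAt φ (φ' t) t := by
    intro t
    have h1 : HasFDerivAt f ((InnerProductSpace.toDual ℝ _) (gradient f (x + t • v)))
        (x + t • v) := (hd _).hasGradientAt
    have h2 : HasDerivAt (fun s : ℝ => f (x + s • v))
        (⟪gradient f (x + t • v), v⟫) t := by
      exact h1.comp_hasDerivAt t (hc t)
    have h3 : HasDerivAt (fun s : ℝ => s * ⟪gradient f x, v⟫)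
        (⟪gradient f x, v⟫) t := by
      simpa using (hasDerivAt_id t).mul_const (⟪gradient f x, v⟫)
    exact (h2.sub_const (f x)).sub h3
  set B : ℝ → ℝ := fun t => L / 2 * ‖v‖ ^ 2 * t ^ 2 with hB
  set B' : ℝ → ℝ := fun t => L * ‖v‖ ^ 2 * t with hB'
  have hBd : ∀ t : ℝ, HasDerivAt B (B' t) t := by
    intro t
    have := (hasDerivAt_pow 2 t).const_mul (L / 2 * ‖v‖ ^ 2)
    refine this.congr_deriv ?_
    simp [B']
    ring
  have key : ∀ t ∈ Set.Icc (0:ℝ) 1, ‖φ t‖ ≤ B t := by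
    refine image_norm_le_of_norm_deriv_right_le_deriv_boundary
      (f := φ) (f' := φ') ?_ ?_ ?_ hBd ?_
    · exact Continuous.continuousOn (by
        exact continuous_iff_continuousAt.2 fun t => (hderiv t).continuousAt)
    · intro t _; exact (hderiv t).hasDerivWithinAt
    · simp [φ, B]
    · intro t ht
      have h1 : |⟪gradient f (x + t • v) - gradient f x, v⟫| ≤
          ‖gradient f (x + t • v) - gradient f x‖ * ‖v‖ := abs_real_inner_le_norm _ _
      have h2 : ‖gradient f (x + t • v) - gradient f x‖ ≤ L * ‖t • v‖ := by
        simpa using hs (x + t • v) x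
      have h3 : ‖t • v‖ = t * ‖v‖ := by
        rw [norm_smul, Real.norm_eq_abs, abs_of_nonneg ht.1]
      have : |φ' t| ≤ L * (t * ‖v‖) * ‖v‖ := by
        calc |φ' t| = |⟪gradient f (x + t • v) - gradient f x, v⟫| := by
              simp [φ', inner_sub_left]
          _ ≤ ‖gradient f (x + t • v) - gradient f x‖ * ‖v‖ := h1
          _ ≤ L * ‖t • v‖ * ‖v‖ := by
              have hvnn : (0:ℝ) ≤ ‖v‖ := norm_nonneg _
              exact mul_le_mul_of_nonneg_right h2 hvnn
          _ = L * (t * ‖v‖) * ‖v‖ := by rw [h3]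
      calc ‖φ' t‖ = |φ' t| := rfl
        _ ≤ L * (t * ‖v‖) * ‖v‖ := this
        _ = B' t := by simp [B']; ring
  have := key 1 (by norm_num)
  have hxy : x + v = y := by simp [hv]
  simpa [φ, B, Real.norm_eq_abs, hxy] using this

/-- Approximate complementary slackness bound in the proof of Theorem 2. -/
theorem approx_complementary_slackness {n J : ℕ} (L : ℝ) (hL : 0 < L)
    (g gtil : Fin J → EuclideanSpace ℝ (Fin n) → ℝ)
    (hg_diff : ∀ j, Differentiable ℝ (g j))
    (hg_smooth : ∀ j x y, ‖gradient (g j) x - gradient (g j) y‖ ≤ L * ‖x - y‖)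
    (hgt_diff : ∀ j, Differentiable ℝ (gtil j))
    (hgt_smooth : ∀ j x y, ‖gradient (gtil j) x - gradient (gtil j) y‖ ≤ L * ‖x - y‖)
    (xt : EuclideanSpace ℝ (Fin n))
    (hval : ∀ j, g j xt = gtil j xt)
    (hgrad : ∀ j, gradient (g j) xt = gradient (gtil j) xt)
    (xhat : EuclideanSpace ℝ (Fin n))
    (lam : Fin J → ℝ) (hlam : ∀ j, 0 ≤ lam j)
    (hcs : ∀ j, lam j * gtil j xhat = 0) :
    ∑ j, lam j * g j xhat ≥ -(L * (∑ j, lam j) * ‖xhat - xt‖ ^ 2) := by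
  have hdiff : ∀ j, |g j xhat - gtil j xhat| ≤ L * ‖xhat - xt‖ ^ 2 := by
    intro j
    have h1 := taylor_quadratic_bound L (g j) (hg_diff j) (hg_smooth j) xt xhat
    have h2 := taylor_quadratic_bound L (gtil j) (hgt_diff j) (hgt_smooth j) xt xhat
    have heq : g j xhat - gtil j xhat =
        (g j xhat - g j xt - ⟪gradient (g j) xt, xhat - xt⟫) -
        (gtil j xhat - gtil j xt - ⟪gradient (gtil j) xt, xhat - xt⟫) := by
      rw [hval j, hgrad j]; ring
    calc |g j xhat - gtil j xhat| ≤
        |g j xhat - g j xt - ⟪gradient (g j) xt, xhat - xt⟫| +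
        |gtil j xhat - gtil j xt - ⟪gradient (gtil j) xt, xhat - xt⟫| := by
          rw [heq]; exact abs_sub _ _
      _ ≤ L / 2 * ‖xhat - xt‖ ^ 2 + L / 2 * ‖xhat - xt‖ ^ 2 := add_le_add h1 h2
      _ = L * ‖xhat - xt‖ ^ 2 := by ring
  have hterm : ∀ j, lam j * g j xhat ≥ -(L * lam j * ‖xhat - xt‖ ^ 2) := by
    intro j
    have : lam j * g j xhat = lam j * (g j xhat - gtil j xhat) := by
      have := hcs j; ring_nf; linarith [hcs j]
    rw [this]
    have h1 : -(L * ‖xhat - xt‖ ^ 2) ≤ g j xhat - gtil j xhat := neg_le_of_abs_le (hdiff j)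
    nlinarith [hlam j, hdiff j]
  calc ∑ j, lam j * g j xhat ≥ ∑ j, -(L * lam j * ‖xhat - xt‖ ^ 2) :=
        Finset.sum_le_sum fun j _ => hterm j
    _ = -(L * (∑ j, lam j) * ‖xhat - xt‖ ^ 2) := by
        rw [Finset.sum_neg_distrib, Finset.mul_sum, Finset.sum_mul]
end

section
/- Let L, G, k̄, c, w > 0 and let (G_t)_{t≥1} be nonnegative reals with G_t ≤ G for all t. Define η_0 := k̄ / w^{1/3}, η_t := k̄ / (w + Σ_{i=1}^{t} G_i²)^{1/3} for t ≥ 1, and β_t := c η_{t−1}² for t ≥ 1, and assume β_t < 1/2 for all t ≥ 1. Then for every t ≥ 1: 8L² η_t + 1/η_t − 1/((1 − 2β_t) η_{t−1}) ≤ −2 η_{t−1} (c − 4L² − G² η_{t−1} / (6 k̄³)). In particular, if additionally η_{t−1} ≤ 1 and c > 4L² + G²/(6k̄³), this quantity is at most −2 η_{t−1}(c − 4L² − G²/(6k̄³)) < 0. (Negativity of the coefficient α_t in the proof of Theorem 1.) -/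
lemma cbrt_sub_le (a b : ℝ) (ha : 0 < a) (hab : a ≤ b) :
    b ^ ((1:ℝ)/3) - a ^ ((1:ℝ)/3) ≤ (b - a) / (3 * (a ^ ((1:ℝ)/3)) ^ 2) := by
  set u := a ^ ((1:ℝ)/3) with hu
  have hu0 : 0 < u := Real.rpow_pos_of_pos ha _
  have hu3 : u ^ 3 = a := by
    rw [hu, ← Real.rpow_natCast (a ^ ((1:ℝ)/3)) 3, ← Real.rpow_mul ha.le]
    norm_num
  set d := (b - a) / (3 * u ^ 2) with hd
  have hd0 : 0 ≤ d := div_nonneg (by linarith) (by positivity)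
  have hb3 : b ≤ (u + d) ^ 3 := by
    have h3d : 3 * u ^ 2 * d = b - a := by
      rw [hd]; field_simp
    nlinarith [sq_nonneg d, mul_nonneg hd0 hd0, mul_nonneg (mul_nonneg hd0 hd0) hd0,
      mul_nonneg hu0.le (mul_nonneg hd0 hd0)]
  have hb0 : 0 ≤ b := le_trans ha.le hab
  have : b ^ ((1:ℝ)/3) ≤ ((u + d) ^ 3) ^ ((1:ℝ)/3) :=
    Real.rpow_le_rpow hb0 hb3 (by norm_num)
  have heq : ((u + d) ^ 3 : ℝ) ^ ((1:ℝ)/3) = u + d := by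
    rw [← Real.rpow_natCast (u + d) 3, ← Real.rpow_mul (by positivity)]
    norm_num
  linarith [this, heq ▸ this]

set_option maxHeartbeats 1000000 in
/-- Negativity of the coefficient α_t in the proof of Theorem 1. -/
theorem alpha_negativity (L Gb kbar c w : ℝ)
    (hL : 0 < L) (hGb : 0 < Gb) (hk : 0 < kbar) (hc : 0 < c) (hw : 0 < w)
    (G : ℕ → ℝ) (hGnn : ∀ t, 1 ≤ t → 0 ≤ G t) (hGle : ∀ t, 1 ≤ t → G t ≤ Gb)
    (η : ℕ → ℝ) (hη0 : η 0 = kbar / w ^ ((1 : ℝ) / 3))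
    (hηt : ∀ t, 1 ≤ t →
      η t = kbar / (w + ∑ i ∈ Finset.Icc 1 t, (G i) ^ 2) ^ ((1 : ℝ) / 3))
    (β : ℕ → ℝ) (hβ : ∀ t, 1 ≤ t → β t = c * (η (t - 1)) ^ 2)
    (hβlt : ∀ t, 1 ≤ t → β t < 1 / 2)
    (t : ℕ) (ht : 1 ≤ t) :
    (8 * L ^ 2 * η t + 1 / η t - 1 / ((1 - 2 * β t) * η (t - 1))
        ≤ -2 * η (t - 1) * (c - 4 * L ^ 2 - Gb ^ 2 * η (t - 1) / (6 * kbar ^ 3)))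
    ∧ (η (t - 1) ≤ 1 → c > 4 * L ^ 2 + Gb ^ 2 / (6 * kbar ^ 3) →
        (8 * L ^ 2 * η t + 1 / η t - 1 / ((1 - 2 * β t) * η (t - 1))
            ≤ -2 * η (t - 1) * (c - 4 * L ^ 2 - Gb ^ 2 / (6 * kbar ^ 3)))
        ∧ -2 * η (t - 1) * (c - 4 * L ^ 2 - Gb ^ 2 / (6 * kbar ^ 3)) < 0) := by
  obtain ⟨s, rfl⟩ : ∃ s, t = s + 1 := ⟨t - 1, (Nat.succ_pred_eq_of_pos ht).symm⟩
  simp only [Nat.add_sub_cancel]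
  set A : ℝ := w + ∑ i ∈ Finset.Icc 1 s, (G i) ^ 2 with hAdef
  set B : ℝ := w + ∑ i ∈ Finset.Icc 1 (s + 1), (G i) ^ 2 with hBdef
  have hsumnn : (0:ℝ) ≤ ∑ i ∈ Finset.Icc 1 s, (G i) ^ 2 :=
    Finset.sum_nonneg fun i _ => sq_nonneg _
  have hA0 : 0 < A := by positivity
  have hBA : B = A + (G (s + 1)) ^ 2 := by
    rw [hBdef, hAdef, Finset.sum_Icc_succ_top (by omega : 1 ≤ s + 1)]; ring
  have hAB : A ≤ B := by nlinarith [sq_nonneg (G (s + 1))]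
  have hB0 : 0 < B := lt_of_lt_of_le hA0 hAB
  set p : ℝ := A ^ ((1:ℝ)/3) with hpdef
  set q : ℝ := B ^ ((1:ℝ)/3) with hqdef
  have hp0 : 0 < p := Real.rpow_pos_of_pos hA0 _
  have hq0 : 0 < q := Real.rpow_pos_of_pos hB0 _
  have hpq : p ≤ q := Real.rpow_le_rpow hA0.le hAB (by norm_num)
  have hes : η s = kbar / p := by
    rcases Nat.eq_zero_or_pos s with h0 | hs
    · subst h0
      simpa [hpdef, hAdef] using hη0
    · rw [hηt s hs]
  have het : η (s + 1) = kbar / q := by rw [hηt (s + 1) (by omega)]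
  have hb : β (s + 1) = c * (kbar / p) ^ 2 := by
    rw [hβ (s + 1) (by omega)]; simp [hes]
  have hblt : c * (kbar / p) ^ 2 < 1 / 2 := hb ▸ hβlt (s + 1) (by omega)
  have hbpos : 0 < c * (kbar / p) ^ 2 := by positivity
  have he0 : 0 < kbar / p := by positivity
  have hf0 : 0 < kbar / q := by positivity
  -- key cube-root bound
  have hkey : q - p ≤ (G (s + 1)) ^ 2 / (3 * p ^ 2) := by
    have := cbrt_sub_le A B hA0 hAB
    rw [← hpdef, ← hqdef] at this
    have hBAeq : B - A = (G (s + 1)) ^ 2 := by rw [hBA]; ring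
    rwa [hBAeq] at this
  have hGs : (G (s + 1)) ^ 2 ≤ Gb ^ 2 := by
    have h1 := hGnn (s + 1) (by omega)
    have h2 := hGle (s + 1) (by omega)
    nlinarith
  set e : ℝ := kbar / p with hedef
  set f : ℝ := kbar / q with hfdef
  clear_value A B p q e f
  -- (i) f ≤ e
  have hfe : f ≤ e := by
    rw [hedef, hfdef]; exact div_le_div_of_nonneg_left hk.le hp0 hpq
  -- (ii) 1/f - 1/e ≤ G² e² / (3 kbar³)
  have h2 : 1 / f - 1 / e ≤ (G (s + 1)) ^ 2 * e ^ 2 / (3 * kbar ^ 3) := by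
    have hl : 1 / f - 1 / e = (q - p) / kbar := by
      rw [hfdef, hedef, one_div_div, one_div_div]; ring
    have hr : (G (s + 1)) ^ 2 * e ^ 2 / (3 * kbar ^ 3) = (G (s + 1)) ^ 2 / (3 * p ^ 2) / kbar := by
      rw [hedef]; field_simp
    rw [hl, hr]
    gcongr
  -- (iii) (1+2β)/e ≤ 1/((1-2β)e)
  have h3 : (1 + 2 * (c * e ^ 2)) / e ≤ 1 / ((1 - 2 * (c * e ^ 2)) * e) := by
    have hpos : 0 < (1 - 2 * (c * e ^ 2)) * e := by
      apply mul_pos _ he0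
      linarith [hblt]
    rw [div_le_div_iff₀ he0 hpos]
    have hb2 : 0 ≤ (c * e ^ 2) ^ 2 * e := by positivity
    nlinarith [hb2]
  have hbdiv : 2 * (c * e ^ 2) / e = 2 * c * e := by
    field_simp
  have hfirst : 8 * L ^ 2 * f + 1 / f - 1 / ((1 - 2 * (c * e ^ 2)) * e)
      ≤ -2 * e * (c - 4 * L ^ 2 - Gb ^ 2 * e / (6 * kbar ^ 3)) := by
    have hi : 8 * L ^ 2 * f ≤ 8 * L ^ 2 * e := by nlinarith [sq_nonneg L]
    have hiv : (G (s + 1)) ^ 2 * e ^ 2 / (3 * kbar ^ 3) ≤ Gb ^ 2 * e ^ 2 / (3 * kbar ^ 3) := by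
      apply div_le_div_of_nonneg_right _ (by positivity)
      nlinarith [sq_nonneg e]
    have hsplit : (1 + 2 * (c * e ^ 2)) / e = 1 / e + 2 * c * e := by
      rw [add_div, hbdiv]
    have hrhs : -2 * e * (c - 4 * L ^ 2 - Gb ^ 2 * e / (6 * kbar ^ 3))
        = 8 * L ^ 2 * e - 2 * c * e + Gb ^ 2 * e ^ 2 / (3 * kbar ^ 3) := by
      field_simp; ring
    rw [hrhs]
    linarith [h3, hsplit ▸ h3]
  rw [hes, het, hb]
  constructor
  · exact hfirst
  · intro he1 hcgt
    have hXY : Gb ^ 2 * e / (6 * kbar ^ 3) ≤ Gb ^ 2 / (6 * kbar ^ 3) := by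
      apply div_le_div_of_nonneg_right _ (by positivity)
      nlinarith [sq_nonneg Gb]
    constructor
    · have : -2 * e * (c - 4 * L ^ 2 - Gb ^ 2 * e / (6 * kbar ^ 3))
          ≤ -2 * e * (c - 4 * L ^ 2 - Gb ^ 2 / (6 * kbar ^ 3)) := by
        nlinarith [he0]
      linarith [hfirst]
    · have hpos : 0 < c - 4 * L ^ 2 - Gb ^ 2 / (6 * kbar ^ 3) := by linarith
      nlinarith [mul_pos he0 hpos]
end
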